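/- Let G be a connected bull-free graph containing an induced complement of C_k for k ≥ 6, say H with vertices v_1,...,v_k and non-edges exactly v_i v_{i+1} (indices mod k), such that the anti-neighborhood A(H) is nonempty. If u is a contact vertex of H (u is adjacent to some vertex of H and to some vertex of A(H)), then u is adjacent to every vertex of H. -/

import Mathlib

open SimpleGraph

/-- The dart: vertices a,b,c,d,e = 0,1,2,3,4; edges ab, ac, ad, bd, cd, de. -/
def dartGraph : SimpleGraph (Fin 5) :=
  SimpleGraph.fromEdgeSet {s(0,1), s(0,2), s(0,3), s(1,3), s(2,3), s(3,4)}

/-- The bull: vertices a,b,c,d,e = 0,1,2,3,4; edges ab, bc, cd, be, ce. -/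
def bullGraph : SimpleGraph (Fin 5) :=
  SimpleGraph.fromEdgeSet {s(0,1), s(1,2), s(2,3), s(1,4), s(2,4)}

/-- The house: C4 on v1..v4 = 0..3 plus v5 = 4 adjacent to v2 = 1 and v3 = 2. -/
def houseGraph : SimpleGraph (Fin 5) :=
  SimpleGraph.fromEdgeSet {s(0,1), s(1,2), s(2,3), s(3,0), s(4,1), s(4,2)}

/-- Anti-neighborhood of a vertex: all vertices distinct from and nonadjacent to `v`. -/
def vertexAnti {V : Type*} (G : SimpleGraph V) (v : V) : Set V :=
  {u | u ≠ v ∧ ¬ G.Adj v u}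

/-- Anti-neighborhood of a set `S`: vertices outside `S` with no neighbor in `S`. -/
def antiNbhd {V : Type*} (G : SimpleGraph V) (S : Set V) : Set V :=
  {v | v ∉ S ∧ ∀ u ∈ S, ¬ G.Adj v u}

/-- Contact vertices of `S`: outside `S`, with a neighbor in `S` and a neighbor in `antiNbhd G S`. -/
def contactSet {V : Type*} (G : SimpleGraph V) (S : Set V) : Set V :=
  {v | v ∉ S ∧ (∃ u ∈ S, G.Adj v u) ∧ ∃ w ∈ antiNbhd G S, G.Adj v w}

/-- `G` has a clique cutset: a clique whose removal disconnects the graph. -/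
def HasCliqueCutset {V : Type*} (G : SimpleGraph V) : Prop :=
  ∃ C : Set V, G.IsClique C ∧ ¬ (G.induce Cᶜ).Preconnected

/-- `U` is a module: no outside vertex distinguishes two vertices of `U`. -/
def IsModule {V : Type*} (G : SimpleGraph V) (U : Set V) : Prop :=
  ∀ z ∉ U, (∀ x ∈ U, G.Adj z x) ∨ (∀ x ∈ U, ¬ G.Adj z x)

/-- `G` is prime: all its modules are trivial. -/
def IsPrime {V : Type*} (G : SimpleGraph V) : Prop :=
  ∀ U : Set V, IsModule G U → U = ∅ ∨ (∃ x, U = {x}) ∨ U = Set.univ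

/-- `G` is perfect: every induced subgraph has chromatic number equal to clique number. -/
def IsPerfect {V : Type*} (G : SimpleGraph V) : Prop :=
  ∀ s : Set V, (G.induce s).chromaticNumber = ((G.induce s).cliqueNum : ℕ∞)

/-- Distance from a vertex to a set of vertices. -/
noncomputable def setDist {V : Type*} (G : SimpleGraph V) (v : V) (S : Set V) : ℕ :=
  sInf {n | ∃ u ∈ S, n = G.dist v u}

lemma bull_emb {V : Type*} (G : SimpleGraph V) (a b c d e : V)
    (hab : G.Adj a b) (hbc : G.Adj b c) (hcd : G.Adj c d) (hbe : G.Adj b e) (hce : G.Adj c e)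
    (nac : ¬G.Adj a c) (nad : ¬G.Adj a d) (nae : ¬G.Adj a e) (nbd : ¬G.Adj b d)
    (nde : ¬G.Adj d e)
    (hac : a ≠ c) (had : a ≠ d) (hae : a ≠ e) (hbd : b ≠ d) (hde : d ≠ e) :
    Nonempty (bullGraph ↪g G) := by
  have hab' := hab.ne
  have hbc' := hbc.ne
  have hcd' := hcd.ne
  have hbe' := hbe.ne
  have hce' := hce.ne
  refine ⟨⟨⟨![a,b,c,d,e], ?_⟩, ?_⟩⟩
  · intro x y
    fin_cases x <;> fin_cases y <;> simp_all [eq_comm, ne_eq]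
  · intro x y
    show G.Adj (![a,b,c,d,e] x) (![a,b,c,d,e] y) ↔ bullGraph.Adj x y
    fin_cases x <;> fin_cases y <;>
      simp_all [bullGraph, Matrix.cons_val_zero, Matrix.cons_val_one, G.adj_comm, Function.Embedding.coeFn_mk]

open Fin.CommRing in
theorem stmt8 {V : Type*} [Fintype V] (G : SimpleGraph V)
    (hconn : G.Connected)
    (hbull : IsEmpty (bullGraph ↪g G))
    (k : ℕ) (hk : 6 ≤ k) (f : (cycleGraph k)ᶜ ↪g G)
    (hA : (antiNbhd G (Set.range f)).Nonempty)
    (u : V) (hu : u ∈ contactSet G (Set.range f)) :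
    ∀ i : Fin k, G.Adj u (f i) := by
  obtain ⟨m, rfl⟩ : ∃ m, k = m + 2 := ⟨k - 2, by omega⟩
  obtain ⟨huR, ⟨v0, ⟨i0, rfl⟩, hui0⟩, w, ⟨hwR, hwN⟩, huw⟩ := hu
  by_contra hcon
  push_neg at hcon
  obtain ⟨j, hj⟩ := hcon
  -- numeral facts
  have hι : ∀ c : ℕ, 0 < c → c < m + 2 → ((c : Fin (m+2)) ≠ 0) := by
    intro c hc1 hc2 h
    have := congrArg Fin.val h
    rw [Fin.val_natCast] at this
    simp [Nat.mod_eq_of_lt hc2] at this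
    omega
  have h1 : (1 : Fin (m+2)) ≠ 0 := by exact_mod_cast hι 1 (by omega) (by omega)
  have h2 : (2 : Fin (m+2)) ≠ 0 := by exact_mod_cast hι 2 (by omega) (by omega)
  have h3 : (3 : Fin (m+2)) ≠ 0 := by exact_mod_cast hι 3 (by omega) (by omega)
  have h4 : (4 : Fin (m+2)) ≠ 0 := by exact_mod_cast hι 4 (by omega) (by omega)
  have h5 : (5 : Fin (m+2)) ≠ 0 := by exact_mod_cast hι 5 (by omega) (by omega)
  have hCadj : ∀ p q : Fin (m+2),
      (cycleGraph (m+2)).Adj p q ↔ (p = q + 1 ∨ q = p + 1) := by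
    intro p q
    rw [cycleGraph_adj]
    constructor
    · rintro (h | h)
      · exact Or.inl (by linear_combination h)
      · exact Or.inr (by linear_combination h)
    · rintro (h | h)
      · exact Or.inl (by linear_combination h)
      · exact Or.inr (by linear_combination h)
  -- adjacency transfer
  have fAdj : ∀ p q : Fin (m+2), p ≠ q → p ≠ q + 1 → q ≠ p + 1 → G.Adj (f p) (f q) := by
    intro p q hne hc1 hc2
    rw [f.map_adj_iff, compl_adj]
    refine ⟨hne, fun h => ?_⟩
    rcases (hCadj p q).mp h with h | h
    exacts [hc1 h, hc2 h]
  have fCons : ∀ p : Fin (m+2), ¬ G.Adj (f p) (f (p+1)) := by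
    intro p h
    rw [f.map_adj_iff, compl_adj] at h
    exact h.2 ((hCadj _ _).mpr (Or.inr rfl))
  have hwne : ∀ p : Fin (m+2), w ≠ f p := fun p h => hwR ⟨p, h.symm⟩
  have hune : ∀ p : Fin (m+2), u ≠ f p := fun p h => huR ⟨p, h.symm⟩
  have hwNf : ∀ p : Fin (m+2), ¬ G.Adj w (f p) := fun p => hwN (f p) ⟨p, rfl⟩
  have finj : Function.Injective f := f.injective
  -- bull from "case Q": y ∈ S, z ∉ S consecutive to y, x ∈ S far from both
  have bullQ : ∀ y z x : Fin (m+2), G.Adj u (f y) → ¬ G.Adj u (f z) → G.Adj u (f x) →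
      (cycleGraph (m+2)).Adj y z → G.Adj (f x) (f y) → G.Adj (f x) (f z) → False := by
    intro y z x hy hz hx hyz hxy hxz
    have nzy : ¬ G.Adj (f z) (f y) := by
      rcases (hCadj y z).mp hyz with h | h
      · rw [h]; exact fCons z
      · rw [h]; exact fun hh => fCons y hh.symm
    have hne : f z ≠ f y := fun h => hyz.ne.symm (finj h)
    obtain ⟨emb⟩ := bull_emb G w u (f x) (f z) (f y) huw.symm hx hxz hy hxy
      (hwNf x) (hwNf z) (hwNf y) hz nzy (hwne x) (hwne z) (hwne y) (hune z) hne
    exact hbull.false emb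
  -- bull from "case P": S ⊆ {a, a+1}
  have bullP : ∀ a : Fin (m+2), G.Adj u (f a) →
      (∀ i, G.Adj u (f i) → i = a ∨ i = a + 1) → False := by
    intro a ha hS
    have na2 : ¬ G.Adj u (f (a+2)) := fun h => by
      rcases hS _ h with h' | h'
      · exact h2 (by linear_combination h')
      · exact h1 (by linear_combination h')
    have nam1 : ¬ G.Adj u (f (a-1)) := fun h => by
      rcases hS _ h with h' | h'
      · exact h1 (by linear_combination -h')
      · exact h2 (by linear_combination -h')
    have nam2 : ¬ G.Adj u (f (a-2)) := fun h => by
      rcases hS _ h with h' | h'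
      · exact h2 (by linear_combination -h')
      · exact h3 (by linear_combination -h')
    have hbc : G.Adj (f a) (f (a+2)) :=
      fAdj a (a+2) (fun h => h2 (by linear_combination -h))
        (fun h => h3 (by linear_combination -h)) (fun h => h1 (by linear_combination h))
    have hcd : G.Adj (f (a+2)) (f (a-1)) :=
      fAdj (a+2) (a-1) (fun h => h3 (by linear_combination h))
        (fun h => h2 (by linear_combination h)) (fun h => h4 (by linear_combination -h))
    have hbe : G.Adj (f a) (f (a-2)) :=
      fAdj a (a-2) (fun h => h2 (by linear_combination h))
        (fun h => h1 (by linear_combination h)) (fun h => h3 (by linear_combination -h))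
    have hce : G.Adj (f (a+2)) (f (a-2)) :=
      fAdj (a+2) (a-2) (fun h => h4 (by linear_combination h))
        (fun h => h3 (by linear_combination h)) (fun h => h5 (by linear_combination -h))
    have nbd : ¬ G.Adj (f a) (f (a-1)) := by
      have := fCons (a-1)
      rw [show a - 1 + 1 = a by ring] at this
      exact fun h => this h.symm
    have nde : ¬ G.Adj (f (a-1)) (f (a-2)) := by
      have := fCons (a-2)
      rw [show a - 2 + 1 = a - 1 by ring] at this
      exact fun h => this h.symm
    have hbd : f a ≠ f (a-1) := fun h => h1 (by linear_combination finj h)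
    have hde : f (a-1) ≠ f (a-2) := fun h => h1 (by linear_combination finj h)
    obtain ⟨emb⟩ := bull_emb G u (f a) (f (a+2)) (f (a-1)) (f (a-2)) ha hbc hcd hbe hce
      na2 nam1 nam2 nbd nde (hune (a+2)) (hune (a-1)) (hune (a-2)) hbd hde
    exact hbull.false emb
  -- Step 1: a boundary pair
  have step1 : ∃ b : Fin (m+2), G.Adj u (f b) ∧ ¬ G.Adj u (f (b+1)) := by
    by_contra h
    push_neg at h
    have hall : ∀ n : ℕ, G.Adj u (f (i0 + n)) := by
      intro n
      induction n with
      | zero => simpa using hui0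
      | succ n ih =>
        have heq : i0 + ((n+1 : ℕ) : Fin (m+2)) = i0 + (n : ℕ) + 1 := by
          push_cast
          ring
        rw [heq]
        exact h _ ih
    have := hall (j - i0).val
    rw [Fin.cast_val_eq_self] at this
    apply hj
    convert this using 2
    ring
  obtain ⟨b, hb, hb1⟩ := step1
  by_cases hx : ∃ x, G.Adj u (f x) ∧ x ≠ b - 1 ∧ x ≠ b ∧ x ≠ b + 1 ∧ x ≠ b + 2
  · obtain ⟨x, hxS, e1, e2, e3, e4⟩ := hx
    exact bullQ b (b+1) x hb hb1 hxS ((hCadj _ _).mpr (Or.inr rfl))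
      (fAdj x b e2 e3 (fun h => e1 (by linear_combination -h)))
      (fAdj x (b+1) e3 (fun h => e4 (by linear_combination h))
        (fun h => e2 (by linear_combination -h)))
  · push_neg at hx
    by_cases hb2 : G.Adj u (f (b+2))
    · by_cases hbm : G.Adj u (f (b-1))
      · exact bullQ (b+2) (b+1) (b-1) hb2 hb1 hbm
          ((hCadj _ _).mpr (Or.inl (by ring)))
          (fAdj (b-1) (b+2) (fun h => h3 (by linear_combination -h))
            (fun h => h4 (by linear_combination -h)) (fun h => h2 (by linear_combination h)))
          (fAdj (b-1) (b+1) (fun h => h2 (by linear_combination -h))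
            (fun h => h3 (by linear_combination -h)) (fun h => h1 (by linear_combination h)))
      · exact bullQ b (b-1) (b+2) hb hbm hb2
          ((hCadj _ _).mpr (Or.inl (by ring)))
          (fAdj (b+2) b (fun h => h2 (by linear_combination h))
            (fun h => h1 (by linear_combination h)) (fun h => h3 (by linear_combination -h)))
          (fAdj (b+2) (b-1) (fun h => h3 (by linear_combination h))
            (fun h => h2 (by linear_combination h)) (fun h => h4 (by linear_combination -h)))
    · by_cases hbm : G.Adj u (f (b-1))
      · refine bullP (b-1) hbm ?_
        intro i hi
        rcases eq_or_ne i (b-1) with h | h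
        · exact Or.inl h
        rcases eq_or_ne i b with h' | h'
        · exact Or.inr (by rw [h']; ring)
        rcases eq_or_ne i (b+1) with h'' | h''
        · exact absurd (h'' ▸ hi) hb1
        have := hx i hi h h' h''
        exact absurd (this ▸ hi) hb2
      · refine bullP b hb ?_
        intro i hi
        rcases eq_or_ne i (b-1) with h | h
        · exact absurd (h ▸ hi) hbm
        rcases eq_or_ne i b with h' | h'
        · exact Or.inl h'
        rcases eq_or_ne i (b+1) with h'' | h''
        · exact Or.inr h''
        have := hx i hi h h' h''
        exact absurd (this ▸ hi) hb2
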